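/- arXiv:1904.12810 — 2 statements merged into one kernel-verified Lean document; each statement's English description precedes it below -/
import Mathlib

section
/- Let C be a real symmetric positive definite 2N×2N matrix and let G ∈ 𝒢. Then Γ(G C Gᵀ) and Γ(C) have the same characteristic polynomial; in particular the eigenvalues of Γ(C) are invariant under the group action (G, C) ↦ G C Gᵀ of 𝒢. -/
open Matrix Polynomial

/-- A real `2N × 2N` matrix has the block form `[[G₁, -G₂],[G₂, G₁]]`. -/
def blockForm {N : ℕ} (G : Matrix (Fin N ⊕ Fin N) (Fin N ⊕ Fin N) ℝ) : Prop :=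
  ∃ G₁ G₂ : Matrix (Fin N) (Fin N) ℝ, G = Matrix.fromBlocks G₁ (-G₂) G₂ G₁

/-- The proper part `Ċ` of a real `2N × 2N` matrix `C` with blocks `[[A, B],[B′, D]]`:
`Ċ = (1/2)·[[A+D, B−B′],[B′−B, A+D]]`. -/
noncomputable def dotPart {N : ℕ} (C : Matrix (Fin N ⊕ Fin N) (Fin N ⊕ Fin N) ℝ) :
    Matrix (Fin N ⊕ Fin N) (Fin N ⊕ Fin N) ℝ :=
  (1/2 : ℝ) • Matrix.fromBlocks (C.toBlocks₁₁ + C.toBlocks₂₂) (C.toBlocks₁₂ - C.toBlocks₂₁)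
    (C.toBlocks₂₁ - C.toBlocks₁₂) (C.toBlocks₁₁ + C.toBlocks₂₂)

/-- The improper part `C̈ = C − Ċ`. -/
noncomputable def ddotPart {N : ℕ} (C : Matrix (Fin N ⊕ Fin N) (Fin N ⊕ Fin N) ℝ) :
    Matrix (Fin N ⊕ Fin N) (Fin N ⊕ Fin N) ℝ :=
  C - dotPart C

/-- `Γ(C) = Ċ^{-1/2} C̈ Ċ^{-1/2}`, where `Ċ^{1/2}` is the (unique) positive semidefinite
(hence, as `Ċ` is positive definite, the unique symmetric positive definite) square root
of `Ċ`, given a proof `h` that `Ċ` is positive definite. -/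
noncomputable def Gamma {N : ℕ} (C : Matrix (Fin N ⊕ Fin N) (Fin N ⊕ Fin N) ℝ)
    (h : (dotPart C).PosDef) : Matrix (Fin N ⊕ Fin N) (Fin N ⊕ Fin N) ℝ :=
  ((h.posSemidef.1.eigenvectorUnitary : Matrix (Fin N ⊕ Fin N) (Fin N ⊕ Fin N) ℝ) *
      diagonal (((↑) : ℝ → ℝ) ∘ Real.sqrt ∘ h.posSemidef.1.eigenvalues) *
      (star h.posSemidef.1.eigenvectorUnitary : Matrix (Fin N ⊕ Fin N) (Fin N ⊕ Fin N) ℝ))⁻¹ *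
    ddotPart C *
    ((h.posSemidef.1.eigenvectorUnitary : Matrix (Fin N ⊕ Fin N) (Fin N ⊕ Fin N) ℝ) *
      diagonal (((↑) : ℝ → ℝ) ∘ Real.sqrt ∘ h.posSemidef.1.eigenvalues) *
      (star h.posSemidef.1.eigenvectorUnitary : Matrix (Fin N ⊕ Fin N) (Fin N ⊕ Fin N) ℝ))⁻¹

noncomputable def psqrt {n : Type*} [Fintype n] [DecidableEq n]
    {A : Matrix n n ℝ} (hA : A.PosDef) : Matrix n n ℝ :=
  (hA.posSemidef.1.eigenvectorUnitary : Matrix n n ℝ) *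
      diagonal (((↑) : ℝ → ℝ) ∘ Real.sqrt ∘ hA.posSemidef.1.eigenvalues) *
      (star hA.posSemidef.1.eigenvectorUnitary : Matrix n n ℝ)

lemma psqrt_mul_self {n : Type*} [Fintype n] [DecidableEq n]
    {A : Matrix n n ℝ} (hA : A.PosDef) : psqrt hA * psqrt hA = A := by
  have hU : (star hA.posSemidef.1.eigenvectorUnitary : Matrix n n ℝ) *
      (hA.posSemidef.1.eigenvectorUnitary : Matrix n n ℝ) = 1 :=
    Unitary.star_mul_self_of_mem hA.posSemidef.1.eigenvectorUnitary.2
  conv_rhs => rw [hA.posSemidef.1.spectral_theorem, Unitary.conjStarAlgAut_apply]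
  unfold psqrt
  simp only [Matrix.mul_assoc]
  rw [← Matrix.mul_assoc _ (hA.posSemidef.1.eigenvectorUnitary : Matrix n n ℝ), hU,
    Matrix.one_mul, ← Matrix.mul_assoc (diagonal _), diagonal_mul_diagonal]
  congr 3
  funext i
  simp [Real.mul_self_sqrt (hA.posSemidef.eigenvalues_nonneg i)]

lemma Gamma_eq {N : ℕ} (C : Matrix (Fin N ⊕ Fin N) (Fin N ⊕ Fin N) ℝ)
    (h : (dotPart C).PosDef) : Gamma C h = (psqrt h)⁻¹ * ddotPart C * (psqrt h)⁻¹ := rfl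



variable {n R : Type*} [Fintype n] [DecidableEq n] [CommRing R]

lemma charpoly_conj (P A : Matrix n n R) (hP : IsUnit P.det) :
    (P * A * P⁻¹).charpoly = A.charpoly := by
  have key : charmatrix (P * A * P⁻¹) =
      P.map C * charmatrix A * (P⁻¹).map C := by
    have h1 : P.map (C : R →+* R[X]) * (P⁻¹).map C = 1 := by
      rw [← Matrix.map_mul, Matrix.mul_nonsing_inv _ hP]
      simp
    rw [charmatrix, charmatrix, mul_sub, sub_mul]
    congr 1
    · rw [mul_assoc, scalar_commute _ (fun r => Commute.all _ _) _]
      rw [← mul_assoc, h1, one_mul]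
    · simp [Matrix.map_mul, RingHom.mapMatrix_apply, mul_assoc]
  have hdet : (P.map (C : R →+* R[X])).det * ((P⁻¹).map (C : R →+* R[X])).det = 1 := by
    rw [← det_mul, ← Matrix.map_mul, Matrix.mul_nonsing_inv _ hP]
    simp
  rw [Matrix.charpoly, key, det_mul, det_mul, Matrix.charpoly]
  ring_nf
  rw [mul_comm, ← mul_assoc, mul_comm ((P⁻¹).map _).det, hdet, one_mul]

lemma charpoly_mul_comm' (P A : Matrix n n R) (hP : IsUnit P.det) :
    (P * A).charpoly = (A * P).charpoly := by
  have h : A * P = P⁻¹ * (P * A) * (P⁻¹)⁻¹ := by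
    rw [Matrix.nonsing_inv_nonsing_inv _ hP, ← mul_assoc,
      Matrix.nonsing_inv_mul _ hP, one_mul]
  rw [h, charpoly_conj _ _ ((Matrix.isUnit_nonsing_inv_det_iff).mpr hP)]

def Jmat (N : ℕ) : Matrix (Fin N ⊕ Fin N) (Fin N ⊕ Fin N) ℝ :=
  Matrix.fromBlocks 0 (-1) 1 0

lemma dotPart_eq {N : ℕ} (C : Matrix (Fin N ⊕ Fin N) (Fin N ⊕ Fin N) ℝ) :
    dotPart C = (1/2 : ℝ) • (C - Jmat N * C * Jmat N) := by
  conv_rhs => rw [← fromBlocks_toBlocks C]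
  rw [dotPart, Jmat]
  simp only [fromBlocks_multiply]
  ext (i | i) (j | j) <;>
    simp [Matrix.toBlocks₁₁, Matrix.toBlocks₁₂, Matrix.toBlocks₂₁, Matrix.toBlocks₂₂,
      Matrix.sub_apply, Matrix.add_apply, Matrix.neg_apply, Matrix.smul_apply] <;> ring

lemma commJ_of_blockForm {N : ℕ} {G : Matrix (Fin N ⊕ Fin N) (Fin N ⊕ Fin N) ℝ}
    (hG : blockForm G) : G * Jmat N = Jmat N * G := by
  obtain ⟨G₁, G₂, rfl⟩ := hG
  rw [Jmat]
  simp only [fromBlocks_multiply]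
  apply Matrix.fromBlocks_inj.mpr
  refine ⟨by noncomm_ring, by noncomm_ring, by noncomm_ring, by noncomm_ring⟩

lemma commJ_transpose {N : ℕ} {G : Matrix (Fin N ⊕ Fin N) (Fin N ⊕ Fin N) ℝ}
    (hG : G * Jmat N = Jmat N * G) : Gᵀ * Jmat N = Jmat N * Gᵀ := by
  have hJt : (Jmat N)ᵀ = - Jmat N := by
    rw [Jmat, fromBlocks_transpose, Matrix.fromBlocks_neg]
    exact Matrix.fromBlocks_inj.mpr ⟨by simp, by simp, by simp, by simp⟩
  have := congrArg Matrix.transpose hG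
  rw [Matrix.transpose_mul, Matrix.transpose_mul, hJt] at this
  simp only [Matrix.neg_mul, Matrix.mul_neg, neg_inj] at this
  exact this.symm

lemma dotPart_conj {N : ℕ} (C : Matrix (Fin N ⊕ Fin N) (Fin N ⊕ Fin N) ℝ)
    {G : Matrix (Fin N ⊕ Fin N) (Fin N ⊕ Fin N) ℝ} (hG : blockForm G) :
    dotPart (G * C * Gᵀ) = G * dotPart C * Gᵀ := by
  have h1 := commJ_of_blockForm hG
  have h2 := commJ_transpose h1
  rw [dotPart_eq, dotPart_eq]
  rw [Matrix.mul_smul, Matrix.smul_mul]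
  congr 1
  rw [Matrix.mul_sub, Matrix.sub_mul]
  congr 1
  calc Jmat N * (G * C * Gᵀ) * Jmat N = (Jmat N * G) * C * (Gᵀ * Jmat N) := by
        noncomm_ring
    _ = (G * Jmat N) * C * (Jmat N * Gᵀ) := by rw [h1, h2]
    _ = G * (Jmat N * C * Jmat N) * Gᵀ := by noncomm_ring

lemma ddotPart_conj {N : ℕ} (C : Matrix (Fin N ⊕ Fin N) (Fin N ⊕ Fin N) ℝ)
    {G : Matrix (Fin N ⊕ Fin N) (Fin N ⊕ Fin N) ℝ} (hG : blockForm G) :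
    ddotPart (G * C * Gᵀ) = G * ddotPart C * Gᵀ := by
  rw [ddotPart, ddotPart, dotPart_conj C hG, Matrix.mul_sub, Matrix.sub_mul]

lemma det_sqrt_isUnit {n : Type*} [Fintype n] [DecidableEq n]
    {A : Matrix n n ℝ} (hA : A.PosDef) : IsUnit (psqrt hA).det := by
  have h : (psqrt hA).det * (psqrt hA).det = A.det := by
    rw [← Matrix.det_mul, psqrt_mul_self hA]
  have hApos : 0 < A.det := hA.det_pos
  refine isUnit_iff_ne_zero.mpr fun h0 => ?_
  rw [h0, mul_zero] at h
  exact hApos.ne (h ▸ rfl)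

theorem statement3 (N : ℕ) (hN : 1 ≤ N) (C G : Matrix (Fin N ⊕ Fin N) (Fin N ⊕ Fin N) ℝ)
    (hC : C.PosDef) (hG : blockForm G) (hGu : IsUnit G)
    (hd : (dotPart C).PosDef) (hd' : (dotPart (G * C * Gᵀ)).PosDef) :
    (Gamma (G * C * Gᵀ) hd').charpoly = (Gamma C hd).charpoly := by
  set S := psqrt hd with hSdef
  set S' := psqrt hd' with hS'def
  have hS : IsUnit S.det := det_sqrt_isUnit hd
  have hS' : IsUnit S'.det := det_sqrt_isUnit hd'
  have hSinv : IsUnit (S⁻¹).det := (Matrix.isUnit_nonsing_inv_det_iff).mpr hS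
  have hS'inv : IsUnit (S'⁻¹).det := (Matrix.isUnit_nonsing_inv_det_iff).mpr hS'
  have hGdet : IsUnit G.det := (Matrix.isUnit_iff_isUnit_det G).mp hGu
  have hGTdet : IsUnit Gᵀ.det := by rwa [Matrix.det_transpose]
  have hSS : S * S = dotPart C := psqrt_mul_self hd
  have hSS' : S' * S' = dotPart (G * C * Gᵀ) := psqrt_mul_self hd'
  have hdd' : ddotPart (G * C * Gᵀ) = G * ddotPart C * Gᵀ := ddotPart_conj C hG
  have hdot' : dotPart (G * C * Gᵀ) = G * dotPart C * Gᵀ := dotPart_conj C hG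
  -- left side
  have step1 : (Gamma (G * C * Gᵀ) hd').charpoly
      = (ddotPart (G * C * Gᵀ) * (dotPart (G * C * Gᵀ))⁻¹).charpoly := by
    rw [Gamma_eq]
    rw [mul_assoc]
    rw [charpoly_mul_comm' _ _ hS'inv]
    rw [mul_assoc, ← Matrix.mul_inv_rev, hSS']
  have step2 : (Gamma C hd).charpoly
      = (ddotPart C * (dotPart C)⁻¹).charpoly := by
    rw [Gamma_eq]
    rw [mul_assoc]
    rw [charpoly_mul_comm' _ _ hSinv]
    rw [mul_assoc, ← Matrix.mul_inv_rev, hSS]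
  rw [step1, step2]
  have key : ddotPart (G * C * Gᵀ) * (dotPart (G * C * Gᵀ))⁻¹
      = G * (ddotPart C * (dotPart C)⁻¹) * G⁻¹ := by
    rw [hdd', hdot', Matrix.mul_inv_rev, Matrix.mul_inv_rev]
    calc G * ddotPart C * Gᵀ * (Gᵀ⁻¹ * ((dotPart C)⁻¹ * G⁻¹))
        = G * ddotPart C * (Gᵀ * Gᵀ⁻¹) * ((dotPart C)⁻¹ * G⁻¹) := by
          noncomm_ring
      _ = G * (ddotPart C * (dotPart C)⁻¹) * G⁻¹ := by
          rw [Matrix.mul_nonsing_inv _ hGTdet]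
          noncomm_ring
  rw [key, charpoly_conj _ _ hGdet]
end

section
/- Let γ > 2 and let (M_N) be a sequence of positive integers with M_N ≥ 2N + 2 and M_N/N → γ as N → ∞. Set a_{N,n} = (M_N − N − n + 1)/2 for 1 ≤ n ≤ N and b_N = (N+1)/2. Then the variance of the log-GLRT statistic under the properness hypothesis converges: Σ_{n=1}^N ( ψ′(a_{N,n}) − ψ′(a_{N,n} + b_N) ) → 2·log( (γ−1)² / (γ(γ−2)) ) as N → ∞. -/
open MeasureTheory Real Filter

/-- The digamma function: the derivative of `log Γ` on `(0, ∞)`. -/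
noncomputable def digamma (x : ℝ) : ℝ :=
  deriv (fun y => Real.log (Real.Gamma y)) x

/-- The trigamma function: the derivative of the digamma function. -/
noncomputable def trigamma (x : ℝ) : ℝ :=
  deriv digamma x

lemma diffAt_logGamma {x : ℝ} (hx : 0 < x) :
    DifferentiableAt ℝ (fun y => Real.log (Real.Gamma y)) x := by
  refine ((Real.differentiableAt_Gamma ?_).log (Real.Gamma_ne_zero ?_)) <;>
    exact fun m => ((lt_of_le_of_lt (neg_nonpos.mpr (Nat.cast_nonneg m)) hx).ne')

lemma hasDerivAt_logGamma {x : ℝ} (hx : 0 < x) :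
    HasDerivAt (fun y => Real.log (Real.Gamma y)) (digamma x) x :=
  (diffAt_logGamma hx).hasDerivAt

lemma logGamma_rec {x : ℝ} (hx : 0 < x) :
    Real.log (Real.Gamma (x + 1)) = Real.log (Real.Gamma x) + Real.log x := by
  rw [Real.Gamma_add_one hx.ne', Real.log_mul hx.ne' (Real.Gamma_pos_of_pos hx).ne', add_comm]

lemma digamma_add_one {x : ℝ} (hx : 0 < x) : digamma (x + 1) = digamma x + 1 / x := by
  unfold digamma
  rw [← deriv_comp_add_const, one_div, ← Real.deriv_log,
    ← deriv_add (diffAt_logGamma hx) (Real.differentiableAt_log hx.ne')]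
  apply Filter.EventuallyEq.deriv_eq
  filter_upwards [eventually_gt_nhds hx] with y hy using logGamma_rec hy

lemma digamma_le_log {x : ℝ} (hx : 0 < x) : digamma x ≤ Real.log x := by
  have hc := Real.convexOn_log_Gamma
  have h := hc.deriv_le_slope (Set.mem_Ioi.mpr hx) (Set.mem_Ioi.mpr (by linarith : (0:ℝ) < x + 1))
    (by linarith) ((diffAt_logGamma hx).congr_of_eventuallyEq (by rfl))
  rw [slope_def_field, show x + 1 - x = (1:ℝ) by ring, div_one] at h
  simpa [Function.comp_def, logGamma_rec hx, digamma] using h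

lemma log_le_digamma {x : ℝ} (hx : 1 < x) : Real.log (x - 1) ≤ digamma x := by
  have hx0 : (0:ℝ) < x := by linarith
  have hx1 : (0:ℝ) < x - 1 := by linarith
  have hc := Real.convexOn_log_Gamma
  have h := hc.slope_le_deriv (Set.mem_Ioi.mpr hx1) (Set.mem_Ioi.mpr hx0)
    (by linarith) ((diffAt_logGamma hx0).congr_of_eventuallyEq (by rfl))
  rw [slope_def_field, show x - (x-1) = (1:ℝ) by ring, div_one] at h
  have := logGamma_rec hx1
  rw [show x - 1 + 1 = x by ring] at this
  simp only [Function.comp] at h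
  rw [this] at h
  simpa [digamma, Function.comp_def] using h
section
variable {x : ℝ}

lemma digamma_add_nat (hx : 0 < x) (n : ℕ) :
    digamma (x + n) = digamma x + ∑ j ∈ Finset.range n, 1 / (x + j) := by
  induction n with
  | zero => simp
  | succ n ih =>
    have h1 : (0:ℝ) < x + n := by positivity
    rw [Finset.sum_range_succ, ← add_assoc, ← ih, show x + (n+1:ℕ) = (x + n) + 1 by push_cast; ring,
      digamma_add_one h1]

lemma tendsto_digamma_aux (hx : 0 < x) :
    Tendsto (fun n : ℕ => Real.log n - ∑ j ∈ Finset.range n, 1 / (x + j)) atTop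
      (nhds (digamma x)) := by
  have key : ∀ n : ℕ, Real.log n - ∑ j ∈ Finset.range n, 1 / (x + j)
      = digamma x + (Real.log n - digamma (x + n)) := by
    intro n; rw [digamma_add_nat hx n]; ring
  simp only [key]
  have h0 : Tendsto (fun n : ℕ => Real.log n - digamma (x + n)) atTop (nhds 0) := by
    have hub : Tendsto (fun n : ℕ => Real.log n - Real.log (x + n - 1)) atTop (nhds 0) := by
      have : Tendsto (fun n : ℕ => (n:ℝ) / (x + n - 1)) atTop (nhds 1) := by
        have h1 : Tendsto (fun n : ℕ => (1 : ℝ) + (x-1) / n) atTop (nhds 1) := by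
          simpa using tendsto_const_nhds.add
            ((tendsto_const_nhds (x := (x-1:ℝ))).div_atTop tendsto_natCast_atTop_atTop)
        have h2 : Tendsto (fun n : ℕ => ((1:ℝ) + (x-1)/n)⁻¹) atTop (nhds 1) := by
          simpa using h1.inv₀ one_ne_zero
        apply h2.congr'
        filter_upwards [eventually_gt_atTop 0] with n hn
        have hn' : (0:ℝ) < n := by exact_mod_cast hn
        field_simp
        ring
      have := (Real.continuousAt_log one_ne_zero).tendsto.comp this
      simp only [Real.log_one, Function.comp] at this
      apply this.congr'
      filter_upwards [eventually_ge_atTop 2] with n hn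
      have hn' : (2:ℝ) ≤ n := by exact_mod_cast hn
      simp only [Function.comp_apply]
      rw [Real.log_div (by positivity) (by nlinarith)]
    have hlb : Tendsto (fun n : ℕ => Real.log n - Real.log (x + n)) atTop (nhds 0) := by
      have : Tendsto (fun n : ℕ => (n:ℝ) / (x + n)) atTop (nhds 1) := by
        have h1 : Tendsto (fun n : ℕ => (1 : ℝ) + x / n) atTop (nhds 1) := by
          simpa using tendsto_const_nhds.add
            ((tendsto_const_nhds (x := (x:ℝ))).div_atTop tendsto_natCast_atTop_atTop)
        have h2 : Tendsto (fun n : ℕ => ((1:ℝ) + x/n)⁻¹) atTop (nhds 1) := by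
          simpa using h1.inv₀ one_ne_zero
        apply h2.congr'
        filter_upwards [eventually_gt_atTop 0] with n hn
        have hn' : (0:ℝ) < n := by exact_mod_cast hn
        field_simp
        ring
      have := (Real.continuousAt_log one_ne_zero).tendsto.comp this
      simp only [Real.log_one, Function.comp] at this
      apply this.congr'
      filter_upwards [eventually_gt_atTop 0] with n hn
      have hn' : (0:ℝ) < n := by exact_mod_cast hn
      simp only [Function.comp_apply]
      rw [Real.log_div (by positivity) (by positivity)]
    refine tendsto_of_tendsto_of_tendsto_of_le_of_le' hlb hub ?_ ?_
    · filter_upwards [eventually_ge_atTop 1] with n hn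
      have hn' : (1:ℝ) ≤ n := by exact_mod_cast hn
      have := digamma_le_log (show (0:ℝ) < x + n by positivity)
      linarith
    · filter_upwards [eventually_ge_atTop 1] with n hn
      have hn' : (1:ℝ) ≤ n := by exact_mod_cast hn
      have := log_le_digamma (show (1:ℝ) < x + n by linarith)
      linarith
  simpa using tendsto_const_nhds.add h0
end
noncomputable def triser (x : ℝ) : ℝ := ∑' j : ℕ, 1 / (x + j) ^ 2

lemma summable_triser {x : ℝ} (hx : 0 < x) : Summable (fun j : ℕ => 1 / (x + j) ^ 2) := by
  set c : ℝ := min x 1 with hc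
  have hc0 : 0 < c := lt_min hx one_pos
  have hbase : Summable (fun j : ℕ => (1:ℝ) / (j+1) ^ 2) := by
    have := (summable_nat_add_iff (f := fun n : ℕ => (1:ℝ) / n ^ 2) 1).mpr
      (summable_one_div_nat_pow.mpr one_lt_two)
    refine this.congr fun j => ?_
    push_cast
    ring_nf
  refine Summable.of_nonneg_of_le (fun j => by positivity)
    (fun j => ?_) (hbase.mul_left (1 / c ^ 2))
  have hj : c * (j + 1) ≤ x + j := by
    rcases le_total x 1 with h | h
    · have : c = x := by rw [hc, min_eq_left h]
      rw [this]; nlinarith [hx.le, (Nat.cast_nonneg j : (0:ℝ) ≤ j)]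
    · have : c = 1 := by rw [hc, min_eq_right h]
      rw [this]; nlinarith [(Nat.cast_nonneg j : (0:ℝ) ≤ j)]
  have h1 : (0:ℝ) < c * (j+1) := by positivity
  have h2 : (c * (j+1)) ^ 2 ≤ (x + j) ^ 2 := by nlinarith
  rw [div_mul_div_comm, one_mul]
  apply div_le_div_of_nonneg_left one_pos.le (by positivity)
  nlinarith [h2]

lemma sum_telescope_inv {x : ℝ} (hx : 0 < x) (n : ℕ) :
    ∑ j ∈ Finset.range n, 1 / ((x + j) * (x + j + 1)) = 1 / x - 1 / (x + n) := by
  induction n with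
  | zero => simp
  | succ n ih =>
    rw [Finset.sum_range_succ, ih]
    have h1 : (0:ℝ) < x + n := by positivity
    have h2 : (0:ℝ) < x + n + 1 := by positivity
    push_cast
    field_simp
    ring

lemma partial_lower {x : ℝ} (hx : 0 < x) (n : ℕ) :
    1 / x - 1 / (x + n) ≤ ∑ j ∈ Finset.range n, 1 / (x + j) ^ 2 := by
  rw [← sum_telescope_inv hx n]
  refine Finset.sum_le_sum fun j _ => ?_
  have h1 : (0:ℝ) < x + j := by positivity
  apply div_le_div_of_nonneg_left one_pos.le (by positivity)
  nlinarith

lemma partial_upper {x : ℝ} (hx : 1 < x) (n : ℕ) :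
    ∑ j ∈ Finset.range n, 1 / (x + j) ^ 2 ≤ 1 / (x - 1) := by
  have hx1 : (0:ℝ) < x - 1 := by linarith
  have := sum_telescope_inv hx1 n
  have hle : ∑ j ∈ Finset.range n, 1 / (x + j) ^ 2
      ≤ ∑ j ∈ Finset.range n, 1 / ((x - 1 + j) * (x - 1 + j + 1)) := by
    refine Finset.sum_le_sum fun j _ => ?_
    have h1 : (0:ℝ) < x - 1 + j := by positivity
    have h2 : x - 1 + j + 1 = x + j := by ring
    rw [h2]
    have h3 : (0:ℝ) < x + j := by positivity
    apply div_le_div_of_nonneg_left one_pos.le (by positivity)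
    nlinarith
  rw [this] at hle
  have h4 : (0:ℝ) < x - 1 + n := by positivity
  have : (0:ℝ) ≤ 1 / (x - 1 + n) := by positivity
  linarith

set_option maxHeartbeats 1000000 in
lemma hasDerivAt_digamma {x : ℝ} (hx : 0 < x) : HasDerivAt digamma (triser x) x := by
  refine hasDerivAt_of_tendstoLocallyUniformlyOn (s := Set.Ioi 0) isOpen_Ioi
    (f := fun (n : ℕ) (y : ℝ) => Real.log n - ∑ j ∈ Finset.range n, 1 / (y + (j:ℝ)))
    (f' := fun (n : ℕ) (y : ℝ) => ∑ j ∈ Finset.range n, 1 / (y + (j:ℝ)) ^ 2)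
    ?_ ?_ (fun y hy => tendsto_digamma_aux hy) hx
  · rw [tendstoLocallyUniformlyOn_iff_forall_isCompact isOpen_Ioi]
    intro K hK hKc
    rcases K.eq_empty_or_nonempty with rfl | hne
    · simp [TendstoUniformlyOn]
    have haK : sInf K ∈ K := hKc.sInf_mem hne
    set a := sInf K with ha
    have ha0 : 0 < a := hK haK
    have hsub : K ⊆ Set.Ici a := fun y hy => csInf_le hKc.bddBelow hy
    have := tendstoUniformlyOn_tsum_nat (f := fun (j : ℕ) (y : ℝ) => 1 / (y + (j:ℝ)) ^ 2)
      (u := fun j => 1 / (a + j) ^ 2) (summable_triser ha0) (s := Set.Ici a) ?_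
    · exact (this.congr_right fun y _ => rfl).mono hsub
    · intro j y hy
      have hy' : a ≤ y := hy
      have h1 : (0:ℝ) < a + j := by positivity
      have h2 : (0:ℝ) < y + j := by linarith
      rw [Real.norm_eq_abs, abs_of_nonneg (by positivity)]
      apply div_le_div_of_nonneg_left one_pos.le (by positivity)
      nlinarith
  · filter_upwards with n y hy
    have hy0 : (0:ℝ) < y := hy
    have hsum : HasDerivAt (fun (z:ℝ) => ∑ j ∈ Finset.range n, 1 / (z + (j:ℝ)))
        (∑ j ∈ Finset.range n, -(1 / (y + (j:ℝ)) ^ 2)) y := by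
      refine HasDerivAt.fun_sum fun j _ => ?_
      have h1 : y + (j:ℝ) ≠ 0 := by positivity
      have := ((hasDerivAt_id y).add_const (j:ℝ)).fun_inv h1
      simpa [one_div, neg_div] using this
    have := (hasDerivAt_const y (Real.log n)).fun_sub hsum
    simpa [Finset.sum_neg_distrib] using this

lemma trigamma_eq {x : ℝ} (hx : 0 < x) : trigamma x = triser x :=
  (hasDerivAt_digamma hx).deriv

lemma le_trigamma {x : ℝ} (hx : 0 < x) : 1 / x ≤ trigamma x := by
  rw [trigamma_eq hx]
  have hps : Tendsto (fun n => ∑ j ∈ Finset.range n, 1 / (x + j) ^ 2) atTop (nhds (triser x)) :=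
    (summable_triser hx).hasSum.tendsto_sum_nat
  have hlb : Tendsto (fun n : ℕ => 1 / x - 1 / (x + n)) atTop (nhds (1 / x)) := by
    have : Tendsto (fun n : ℕ => 1 / (x + n)) atTop (nhds 0) := by
      simp only [one_div]
      exact (tendsto_atTop_add_const_left _ x tendsto_natCast_atTop_atTop).inv_tendsto_atTop
    simpa using tendsto_const_nhds.sub this
  exact le_of_tendsto_of_tendsto' hlb hps (partial_lower hx)

lemma trigamma_le {x : ℝ} (hx : 1 < x) : trigamma x ≤ 1 / (x - 1) := by
  rw [trigamma_eq (by linarith)]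
  have hps : Tendsto (fun n => ∑ j ∈ Finset.range n, 1 / (x + j) ^ 2) atTop (nhds (triser x)) :=
    (summable_triser (by linarith)).hasSum.tendsto_sum_nat
  exact le_of_tendsto hps (Filter.Eventually.of_forall (partial_upper hx))
lemma harm_cast (m : ℕ) : ((harmonic m : ℚ) : ℝ) = ∑ i ∈ Finset.range m, 1 / ((i:ℝ) + 1) := by
  rw [harmonic]
  push_cast
  exact Finset.sum_congr rfl fun i _ => by rw [one_div]

lemma tendsto_H_sub_log :
    Tendsto (fun n : ℕ => (∑ i ∈ Finset.range n, 1 / ((i:ℝ) + 1)) - Real.log n) atTop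
      (nhds Real.eulerMascheroniConstant) := by
  refine Real.tendsto_harmonic_sub_log.congr fun n => ?_
  rw [harm_cast]

lemma sum_shift : ∀ (N r : ℕ), N < r →
    ∑ n ∈ Finset.Icc 1 N, (1:ℝ) / ((r:ℝ) - n)
      = (∑ i ∈ Finset.range (r-1), 1 / ((i:ℝ)+1))
        - ∑ i ∈ Finset.range (r-1-N), 1 / ((i:ℝ)+1) := by
  intro N
  induction N with
  | zero => intro r _; simp
  | succ N ih =>
    intro r hr
    have hN : N < r := by omega
    rw [Finset.sum_Icc_succ_top (by omega : 1 ≤ N+1), ih r hN]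
    have h1 : r - 1 - N = (r - 1 - (N+1)) + 1 := by omega
    rw [h1, Finset.sum_range_succ]
    have h2 : ((r - 1 - (N+1) : ℕ) : ℝ) = (r:ℝ) - 1 - (N+1) := by
      have h3 : (N+1) ≤ r - 1 := by omega
      have h4 : 1 ≤ r := by omega
      rw [Nat.cast_sub h3, Nat.cast_sub h4]
      push_cast
      ring
    rw [h2]
    push_cast
    ring

lemma tendsto_harm_main (r : ℕ → ℕ) (ρ : ℝ) (hρ : 1 < ρ)
    (hge : ∀ N, N + 1 ≤ r N)
    (hr : Tendsto (fun N : ℕ => (r N : ℝ) / N) atTop (nhds ρ)) :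
    Tendsto (fun N : ℕ => ∑ n ∈ Finset.Icc 1 N, (1:ℝ) / ((r N : ℝ) - n)) atTop
      (nhds (Real.log ρ - Real.log (ρ - 1))) := by
  set H : ℕ → ℝ := fun m => ∑ i ∈ Finset.range m, 1 / ((i:ℝ) + 1) with hH
  set p : ℕ → ℕ := fun N => r N - 1 with hp
  set q : ℕ → ℕ := fun N => r N - 1 - N with hq
  have hcastp : ∀ N, ((p N : ℕ) : ℝ) = (r N : ℝ) - 1 := by
    intro N; rw [hp]; rw [Nat.cast_sub (by have := hge N; omega)]; norm_num
  have hcastq : ∀ N, ((q N : ℕ) : ℝ) = (r N : ℝ) - 1 - N := by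
    intro N; rw [hq]
    rw [Nat.cast_sub (by have := hge N; omega), Nat.cast_sub (by have := hge N; omega)]
    norm_num
  have hp' : Tendsto (fun N : ℕ => ((p N : ℕ) : ℝ) / N) atTop (nhds ρ) := by
    have := hr.sub (tendsto_const_div_atTop_nhds_zero_nat 1)
    rw [sub_zero] at this
    refine this.congr fun N => ?_
    rw [hcastp, sub_div]
  have hq' : Tendsto (fun N : ℕ => ((q N : ℕ) : ℝ) / N) atTop (nhds (ρ - 1)) := by
    have h0 := (hr.sub (tendsto_const_div_atTop_nhds_zero_nat 1)).sub (tendsto_const_nhds (x := (1:ℝ)))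
    rw [sub_zero] at h0
    refine h0.congr' ?_
    filter_upwards [eventually_ge_atTop 1] with N hN
    have hN' : ((N:ℝ)) ≠ 0 := by positivity
    rw [hcastq, sub_div, sub_div, div_self hN']
  have hρ0 : (0:ℝ) < ρ := by linarith
  have hρ1 : (0:ℝ) < ρ - 1 := by linarith
  have hpT : Tendsto p atTop atTop := by
    rw [← tendsto_natCast_atTop_iff (R := ℝ)]
    have := hp'.pos_mul_atTop hρ0 tendsto_natCast_atTop_atTop
    refine this.congr' ?_
    filter_upwards [eventually_ge_atTop 1] with N hN
    have hN' : ((N:ℝ)) ≠ 0 := by positivity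
    field_simp
  have hqT : Tendsto q atTop atTop := by
    rw [← tendsto_natCast_atTop_iff (R := ℝ)]
    have := hq'.pos_mul_atTop hρ1 tendsto_natCast_atTop_atTop
    refine this.congr' ?_
    filter_upwards [eventually_ge_atTop 1] with N hN
    have hN' : ((N:ℝ)) ≠ 0 := by positivity
    field_simp
  have hHp : Tendsto (fun N => H (p N) - Real.log (p N)) atTop
      (nhds Real.eulerMascheroniConstant) := tendsto_H_sub_log.comp hpT
  have hHq : Tendsto (fun N => H (q N) - Real.log (q N)) atTop
      (nhds Real.eulerMascheroniConstant) := tendsto_H_sub_log.comp hqT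
  have l1 : Tendsto (fun N => Real.log (((p N : ℕ):ℝ) / N)) atTop (nhds (Real.log ρ)) :=
    ((Real.continuousAt_log hρ0.ne').tendsto).comp hp'
  have l2 : Tendsto (fun N => Real.log (((q N : ℕ):ℝ) / N)) atTop (nhds (Real.log (ρ-1))) :=
    ((Real.continuousAt_log hρ1.ne').tendsto).comp hq'
  have hlog : Tendsto (fun N => Real.log (p N) - Real.log (q N)) atTop
      (nhds (Real.log ρ - Real.log (ρ - 1))) := by
    refine (l1.sub l2).congr' ?_
    filter_upwards [hqT.eventually_ge_atTop 1, eventually_ge_atTop 1] with N hq1 hN1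
    have hp1 : 1 ≤ p N := le_trans hq1 (Nat.sub_le _ _)
    have h1 : ((p N:ℕ):ℝ) ≠ 0 := by positivity
    have h2 : ((q N:ℕ):ℝ) ≠ 0 := by
      have : (1:ℝ) ≤ ((q N:ℕ):ℝ) := by exact_mod_cast hq1
      linarith
    have h3 : ((N:ℕ):ℝ) ≠ 0 := by positivity
    rw [Real.log_div h1 h3, Real.log_div h2 h3]
    ring
  have final := (hHp.sub hHq).add hlog
  rw [sub_self, zero_add] at final
  refine final.congr fun N => ?_
  rw [sum_shift N (r N) (by have := hge N; omega)]
  ring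

theorem statement16 (γ : ℝ) (hγ : 2 < γ) (M : ℕ → ℕ)
    (hM : ∀ N : ℕ, 2 * N + 2 ≤ M N)
    (hlim : Tendsto (fun N : ℕ => (M N : ℝ) / N) atTop (nhds γ)) :
    Tendsto (fun N : ℕ =>
      ∑ n ∈ Finset.Icc 1 N,
        (trigamma (((M N : ℝ) - N - n + 1) / 2)
          - trigamma (((M N : ℝ) - N - n + 1) / 2 + ((N : ℝ) + 1) / 2)))
      atTop (nhds (2 * Real.log ((γ - 1) ^ 2 / (γ * (γ - 2))))) := by
  have hM2 : ∀ N : ℕ, 2*(N:ℝ)+2 ≤ (M N : ℝ) := fun N => by exact_mod_cast hM N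
  have hg0 : (0:ℝ) < γ := by linarith
  have hg1 : (0:ℝ) < γ - 1 := by linarith
  have hg2 : (0:ℝ) < γ - 2 := by linarith
  -- cast lemmas
  have hc1 : ∀ N : ℕ, ((M N - N + 1 : ℕ) : ℝ) = (M N : ℝ) - N + 1 := by
    intro N; have := hM N
    push_cast [Nat.cast_sub (by omega : N ≤ M N)]; ring
  have hc3 : ∀ N : ℕ, ((M N - N - 1 : ℕ) : ℝ) = (M N : ℝ) - N - 1 := by
    intro N; have := hM N
    rw [Nat.sub_sub, Nat.cast_sub (by omega : N + 1 ≤ M N)]; push_cast; ring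
  -- limits of the r-sequences
  have t1 : Tendsto (fun N : ℕ => ((M N - N + 1 : ℕ):ℝ)/N) atTop (nhds (γ-1)) := by
    have h := (hlim.sub (tendsto_const_nhds (x := (1:ℝ)))).add
      (tendsto_const_div_atTop_nhds_zero_nat 1)
    rw [add_zero] at h
    refine h.congr' ?_
    filter_upwards [eventually_ge_atTop 1] with N hN
    have hN' : ((N:ℝ)) ≠ 0 := by positivity
    rw [hc1]
    field_simp
  have t3 : Tendsto (fun N : ℕ => ((M N - N - 1 : ℕ):ℝ)/N) atTop (nhds (γ-1)) := by
    have h := (hlim.sub (tendsto_const_nhds (x := (1:ℝ)))).sub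
      (tendsto_const_div_atTop_nhds_zero_nat 1)
    rw [sub_zero] at h
    refine h.congr' ?_
    filter_upwards [eventually_ge_atTop 1] with N hN
    have hN' : ((N:ℝ)) ≠ 0 := by positivity
    rw [hc3]
    field_simp
  have t4 : Tendsto (fun N : ℕ => ((M N + 2 : ℕ):ℝ)/N) atTop (nhds γ) := by
    have h := hlim.add (tendsto_const_div_atTop_nhds_zero_nat 2)
    rw [add_zero] at h
    refine h.congr fun N => ?_
    push_cast
    rw [add_div]
  -- the four harmonic-sum limits
  have S1 := tendsto_harm_main (fun N => M N - N + 1) (γ-1) (by linarith)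
    (fun N => by have := hM N; show N + 1 ≤ M N - N + 1; omega) t1
  have S2 := tendsto_harm_main M γ (by linarith) (fun N => by have := hM N; omega) hlim
  have S3 := tendsto_harm_main (fun N => M N - N - 1) (γ-1) (by linarith)
    (fun N => by have := hM N; show N + 1 ≤ M N - N - 1; omega) t3
  have S4 := tendsto_harm_main (fun N => M N + 2) γ (by linarith)
    (fun N => by have := hM N; show N + 1 ≤ M N + 2; omega) t4
  have hval : 2*(Real.log (γ-1) - Real.log (γ-1-1)) - 2*(Real.log γ - Real.log (γ-1))
      = 2 * Real.log ((γ - 1) ^ 2 / (γ * (γ - 2))) := by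
    rw [Real.log_div (pow_ne_zero 2 hg1.ne') (mul_ne_zero hg0.ne' hg2.ne'),
      Real.log_mul hg0.ne' hg2.ne', Real.log_pow]
    push_cast
    ring
  have hLB : Tendsto (fun N : ℕ =>
      2 * ∑ n ∈ Finset.Icc 1 N, (1:ℝ)/(((M N - N + 1 : ℕ):ℝ) - n)
        - 2 * ∑ n ∈ Finset.Icc 1 N, (1:ℝ)/(((M N : ℕ):ℝ) - n)) atTop
      (nhds (2 * Real.log ((γ - 1) ^ 2 / (γ * (γ - 2))))) := by
    rw [← hval]
    exact (S1.const_mul 2).sub (S2.const_mul 2)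
  have hUB : Tendsto (fun N : ℕ =>
      2 * ∑ n ∈ Finset.Icc 1 N, (1:ℝ)/(((M N - N - 1 : ℕ):ℝ) - n)
        - 2 * ∑ n ∈ Finset.Icc 1 N, (1:ℝ)/(((M N + 2 : ℕ):ℝ) - n)) atTop
      (nhds (2 * Real.log ((γ - 1) ^ 2 / (γ * (γ - 2))))) := by
    rw [← hval]
    exact (S3.const_mul 2).sub (S4.const_mul 2)
  refine tendsto_of_tendsto_of_tendsto_of_le_of_le hLB hUB ?_ ?_
  · -- lower bound
    intro N
    simp only [hc1]
    rw [Finset.mul_sum, Finset.mul_sum, ← Finset.sum_sub_distrib]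
    refine Finset.sum_le_sum fun n hn => ?_
    obtain ⟨hn1, hnN⟩ := Finset.mem_Icc.mp hn
    have hn1' : (1:ℝ) ≤ n := by exact_mod_cast hn1
    have hnN' : (n:ℝ) ≤ N := by exact_mod_cast hnN
    have hm := hM2 N
    have hN0 : (0:ℝ) ≤ N := Nat.cast_nonneg N
    have ha : (1:ℝ) < ((M N : ℝ) - N - n + 1) / 2 := by linarith
    have hab : (1:ℝ) < ((M N : ℝ) - N - n + 1) / 2 + ((N:ℝ)+1)/2 := by linarith
    have l1 := le_trigamma (by linarith : (0:ℝ) < ((M N : ℝ) - N - n + 1) / 2)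
    have l2 := trigamma_le hab
    have e1 : 1/(((M N : ℝ) - N - n + 1) / 2) = 2 * (1/(((M N : ℝ) - N + 1) - n)) := by
      rw [one_div_div, mul_one_div]
      congr 1
      ring
    have e2 : (((M N : ℝ) - N - n + 1) / 2 + ((N:ℝ)+1)/2) - 1 = ((M N : ℝ) - n)/2 := by ring
    have e3 : 1/((((M N : ℝ) - N - n + 1) / 2 + ((N:ℝ)+1)/2) - 1) = 2 * (1/((M N : ℝ) - n)) := by
      rw [e2, one_div_div, mul_one_div]
    rw [e1] at l1
    rw [e3] at l2
    linarith
  · -- upper bound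
    intro N
    simp only [hc3]
    push_cast
    rw [Finset.mul_sum, Finset.mul_sum, ← Finset.sum_sub_distrib]
    refine Finset.sum_le_sum fun n hn => ?_
    obtain ⟨hn1, hnN⟩ := Finset.mem_Icc.mp hn
    have hn1' : (1:ℝ) ≤ n := by exact_mod_cast hn1
    have hnN' : (n:ℝ) ≤ N := by exact_mod_cast hnN
    have hm := hM2 N
    have hN0 : (0:ℝ) ≤ N := Nat.cast_nonneg N
    have ha : (1:ℝ) < ((M N : ℝ) - N - n + 1) / 2 := by linarith
    have hab : (1:ℝ) < ((M N : ℝ) - N - n + 1) / 2 + ((N:ℝ)+1)/2 := by linarith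
    have l1 := trigamma_le ha
    have l2 := le_trigamma (by linarith : (0:ℝ) < ((M N : ℝ) - N - n + 1) / 2 + ((N:ℝ)+1)/2)
    have e1 : (((M N : ℝ) - N - n + 1) / 2) - 1 = ((M N : ℝ) - N - n - 1)/2 := by ring
    have e1' : 1/((((M N : ℝ) - N - n + 1) / 2) - 1) = 2 * (1/(((M N : ℝ) - N - 1) - n)) := by
      rw [e1, one_div_div, mul_one_div]
      congr 1
      ring
    have e2 : (((M N : ℝ) - N - n + 1) / 2 + ((N:ℝ)+1)/2) = ((M N : ℝ) - n + 2)/2 := by ring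
    have e2' : 1/((((M N : ℝ) - N - n + 1) / 2 + ((N:ℝ)+1)/2)) = 2 * (1/(((M N : ℝ) + 2) - n)) := by
      rw [e2, one_div_div, mul_one_div]
      congr 1
      ring
    rw [e1'] at l1
    rw [e2'] at l2
    linarith
end
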